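/- Let g₁, ..., g_l be jointly Gaussian real random variables, each centered with variance 1, such that Cov(g_i, g_j) ≥ 0 for all i, j. Then E[g₁ · g₂ · ⋯ · g_l] ≤ E[g₁^l]. -/

import Mathlib

open MeasureTheory ProbabilityTheory Real
open scoped NNReal ENNReal

lemma aux_exp_int (t : ℝ) {b : ℝ} (hb : 0 < b) :
    Integrable (fun x : ℝ => exp (t * x) * exp (-b * x ^ 2)) := by
  have h := ((integrable_exp_neg_mul_sq hb).comp_sub_right (t / (2 * b))).const_mul
    (exp (t ^ 2 / (4 * b)))
  refine h.congr (Filter.Eventually.of_forall fun x => ?_)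
  simp only [← exp_add]; congr 1; field_simp; ring

lemma aux_abs_pow_le (n : ℕ) (x : ℝ) :
    |x| ^ n ≤ n.factorial * (exp x + exp (-x)) := by
  have h1 : ∀ y : ℝ, 0 ≤ y → y ^ n ≤ n.factorial * exp y := by
    intro y hy
    have hs := Real.sum_le_exp_of_nonneg hy (n + 1)
    have hterm : y ^ n / (n.factorial : ℝ) ≤ ∑ i ∈ Finset.range (n + 1), y ^ i / (i.factorial : ℝ) :=
      Finset.single_le_sum (f := fun i => y ^ i / (i.factorial : ℝ))
        (fun i _ => by positivity) (Finset.self_mem_range_succ n)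
    have := hterm.trans hs
    rw [div_le_iff₀ (by positivity)] at this
    linarith [this]
  have h2 : |x| ^ n ≤ n.factorial * exp |x| := h1 _ (abs_nonneg x)
  have h3 : exp |x| ≤ exp x + exp (-x) := by
    rcases le_total 0 x with hx | hx
    · rw [abs_of_nonneg hx]; nlinarith [exp_pos (-x)]
    · rw [abs_of_nonpos hx]; nlinarith [exp_pos x]
  have hf : (0:ℝ) ≤ n.factorial := Nat.cast_nonneg _
  exact h2.trans (mul_le_mul_of_nonneg_left h3 hf)

lemma aux_int_gauss (n : ℕ) (v : ℝ≥0) :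
    Integrable (fun x : ℝ => |x| ^ n) (gaussianReal 0 v) := by
  by_cases hv : v = 0
  · subst hv
    rw [gaussianReal_zero_var]
    refine ⟨(measurable_id.abs.pow_const n).aestronglyMeasurable, ?_⟩
    rw [HasFiniteIntegral, lintegral_dirac' _ (by fun_prop)]
    exact ENNReal.coe_lt_top
  · rw [gaussianReal_of_var_ne_zero _ hv,
      integrable_withDensity_iff (measurable_gaussianPDF _ _)
        (Filter.Eventually.of_forall fun x => ENNReal.ofReal_lt_top)]
    have hb : (0:ℝ) < (2 * (v:ℝ))⁻¹ := by positivity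
    set b := (2 * (v:ℝ))⁻¹ with hbdef
    have hmain := ((aux_exp_int 1 hb).add (aux_exp_int (-1) hb)).const_mul
      ((n.factorial : ℝ) * (Real.sqrt (2 * π * v))⁻¹)
    refine hmain.mono' ?_ (Filter.Eventually.of_forall fun x => ?_)
    · exact ((measurable_id.abs.pow_const n).mul
        ((measurable_gaussianPDF 0 v).ennreal_toReal)).aestronglyMeasurable
    · have hpdf : (gaussianPDF 0 v x).toReal = gaussianPDFReal 0 v x :=
        ENNReal.toReal_ofReal (gaussianPDFReal_nonneg _ _ _)
      rw [Real.norm_eq_abs, hpdf]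
      have hpdfval : gaussianPDFReal 0 v x = (Real.sqrt (2 * π * v))⁻¹ * exp (-b * x ^ 2) := by
        rw [gaussianPDFReal, hbdef]
        have hx : -(x - 0) ^ 2 / (2 * (v:ℝ)) = -(2 * (v:ℝ))⁻¹ * x ^ 2 := by
          have hv' : (v:ℝ) ≠ 0 := by exact_mod_cast hv
          field_simp
          ring
        rw [hx]
      rw [hpdfval]
      have h1 := aux_abs_pow_le n x
      have h2 : (0:ℝ) ≤ (Real.sqrt (2 * π * v))⁻¹ := by positivity
      have h3 : (0:ℝ) < exp (-b * x ^ 2) := exp_pos _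
      rw [abs_mul, abs_of_nonneg (by positivity : (0:ℝ) ≤ |x| ^ n),
        abs_of_nonneg (by positivity : (0:ℝ) ≤ (Real.sqrt (2 * π * ↑v))⁻¹ * exp (-b * x ^ 2))]
      have : exp (1 * x) * exp (-b * x ^ 2) + exp (-1 * x) * exp (-b * x ^ 2)
          = (exp x + exp (-x)) * exp (-b * x ^ 2) := by rw [one_mul, neg_one_mul]; ring
      simp only [Pi.add_apply]
      rw [this]
      calc |x| ^ n * ((Real.sqrt (2 * π * v))⁻¹ * exp (-b * x ^ 2))
          ≤ n.factorial * (exp x + exp (-x)) * ((Real.sqrt (2 * π * v))⁻¹ * exp (-b * x ^ 2)) := by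
            apply mul_le_mul_of_nonneg_right h1 (by positivity)
        _ = n.factorial * (Real.sqrt (2 * π * ↑v))⁻¹ * ((exp x + exp (-x)) * exp (-b * x ^ 2)) := by
            ring

lemma aux_int_gauss_pow (n : ℕ) (v : ℝ≥0) :
    Integrable (fun x : ℝ => x ^ n) (gaussianReal 0 v) := by
  refine (aux_int_gauss n v).mono' (by fun_prop) (Filter.Eventually.of_forall fun x => ?_)
  rw [Real.norm_eq_abs, abs_pow]

lemma aux_gauss_neg (v : ℝ≥0) :
    (gaussianReal 0 v).map (fun x : ℝ => -x) = gaussianReal 0 v := by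
  have h := gaussianReal_map_const_mul (μ := 0) (v := v) (-1)
  have h1 : (NNReal.mk ((-1:ℝ)^2) (sq_nonneg _)) = 1 := by ext; norm_num
  rw [h1, one_mul, mul_zero] at h
  rw [← h]
  congr 1
  ext x
  ring

lemma aux_odd_moment {n : ℕ} (hn : Odd n) (v : ℝ≥0) :
    ∫ x, x ^ n ∂(gaussianReal 0 v) = 0 := by
  have key : ∫ x, x ^ n ∂(gaussianReal 0 v) = ∫ x, (-x) ^ n ∂(gaussianReal 0 v) := by
    conv_lhs => rw [← aux_gauss_neg v]
    rw [integral_map (by fun_prop) (by fun_prop)]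
  simp only [hn.neg_pow] at key
  rw [integral_neg] at key
  linarith

noncomputable def sg (b : Bool) : ℝ := if b then 1 else -1

lemma sg_sum_pow (k : ℕ) : ∑ b : Bool, sg b ^ k = if Even k then 2 else 0 := by
  rcases Nat.even_or_odd k with h | h
  · simp [sg, Fintype.sum_bool, h.neg_one_pow, h]
  · simp [sg, Fintype.sum_bool, h.neg_one_pow, Nat.not_even_iff_odd.mpr h]

lemma aux_key (l : ℕ) (f : Fin l → Fin l) :
    ∑ ε : Fin l → Bool, ((∏ i, sg (ε i)) * ∏ t, sg (ε (f t)))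
      = if Function.Bijective f then (2:ℝ)^l else 0 := by
  classical
  set m : Fin l → ℕ := fun i => (Finset.univ.filter fun t => f t = i).card with hm
  have step1 : ∀ ε : Fin l → Bool,
      (∏ i, sg (ε i)) * ∏ t, sg (ε (f t)) = ∏ i, sg (ε i) ^ (m i + 1) := by
    intro ε
    have h1 : ∏ t, sg (ε (f t)) = ∏ i, sg (ε i) ^ m i := by
      rw [← Finset.prod_fiberwise Finset.univ f (fun t => sg (ε (f t)))]
      refine Finset.prod_congr rfl fun i _ => ?_
      have hcg : ∏ t ∈ Finset.univ.filter fun t => f t = i, sg (ε (f t))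
          = ∏ t ∈ Finset.univ.filter fun t => f t = i, sg (ε i) :=
        Finset.prod_congr rfl fun t ht => by rw [(Finset.mem_filter.mp ht).2]
      rw [hcg, Finset.prod_const]
    rw [h1, ← Finset.prod_mul_distrib]
    exact Finset.prod_congr rfl fun i _ => by rw [pow_succ']
  simp only [step1]
  have step2 : ∑ ε : Fin l → Bool, ∏ i, sg (ε i) ^ (m i + 1)
      = ∏ i, ∑ b : Bool, sg b ^ (m i + 1) := by
    rw [Finset.prod_univ_sum]
    rw [← Fintype.piFinset_univ]
  rw [step2]
  simp only [sg_sum_pow]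
  by_cases hf : Function.Bijective f
  · have hall : ∀ i, m i = 1 := by
      intro i
      obtain ⟨a, ha, hu⟩ := hf.existsUnique i
      have : (Finset.univ.filter fun t => f t = i) = {a} := by
        ext t
        simp only [Finset.mem_filter, Finset.mem_univ, true_and, Finset.mem_singleton]
        exact ⟨fun h => hu t h, fun h => h ▸ ha⟩
      simp [hm, this]
    rw [if_pos hf]
    have : ∀ i : Fin l, (if Even (m i + 1) then (2:ℝ) else 0) = 2 := by
      intro i; rw [hall i]; norm_num
    simp only [this, Finset.prod_const, Finset.card_univ, Fintype.card_fin]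
  · rw [if_neg hf]
    have hnotsurj : ¬ Function.Surjective f := by
      intro hs
      exact hf (Finite.surjective_iff_bijective.mp hs)
    simp only [Function.Surjective, not_forall] at hnotsurj
    obtain ⟨i, hi⟩ := hnotsurj
    push_neg at hi
    refine Finset.prod_eq_zero (Finset.mem_univ i) ?_
    have : m i = 0 := by
      simp only [hm, Finset.card_eq_zero, Finset.filter_eq_empty_iff]
      exact fun t _ => hi t
    rw [this]
    norm_num

lemma aux_card_bij (l : ℕ) :
    (Finset.univ.filter fun f : Fin l → Fin l => Function.Bijective f).card = l.factorial := by
  classical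
  have h1 : (Finset.univ.filter fun f : Fin l → Fin l => Function.Bijective f).card
      = Fintype.card {f : Fin l → Fin l // Function.Bijective f} := by
    rw [Fintype.card_subtype]
  rw [h1]
  have e : {f : Fin l → Fin l // Function.Bijective f} ≃ Equiv.Perm (Fin l) :=
    { toFun := fun p => Equiv.ofBijective p.1 p.2
      invFun := fun q => ⟨q, q.bijective⟩
      left_inv := fun p => Subtype.ext rfl
      right_inv := fun q => Equiv.ext fun x => rfl }
  rw [Fintype.card_congr e, Fintype.card_perm, Fintype.card_fin]

lemma aux_polar (l : ℕ) (x : Fin l → ℝ) :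
    ∑ ε : Fin l → Bool, (∏ i, sg (ε i)) * (∑ i, sg (ε i) * x i) ^ l
      = (2 ^ l * l.factorial : ℝ) * ∏ i, x i := by
  classical
  have hexp : ∀ ε : Fin l → Bool, (∑ i, sg (ε i) * x i) ^ l
      = ∑ f : Fin l → Fin l, ∏ t : Fin l, (sg (ε (f t)) * x (f t)) := by
    intro ε
    have h0 : (∑ i, sg (ε i) * x i) ^ l = ∏ _t : Fin l, (∑ i, sg (ε i) * x i) := by
      rw [Finset.prod_const, Finset.card_univ, Fintype.card_fin]
    rw [h0, Finset.prod_univ_sum, Fintype.piFinset_univ]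
  simp only [hexp, Finset.mul_sum]
  rw [Finset.sum_comm]
  have hterm : ∀ f : Fin l → Fin l,
      ∑ ε : Fin l → Bool, (∏ i, sg (ε i)) * ∏ t : Fin l, (sg (ε (f t)) * x (f t))
      = (if Function.Bijective f then (2:ℝ)^l else 0) * ∏ t, x (f t) := by
    intro f
    rw [← aux_key l f, Finset.sum_mul]
    refine Finset.sum_congr rfl fun ε _ => ?_
    rw [Finset.prod_mul_distrib]
    ring
  simp only [hterm]
  simp only [ite_mul, zero_mul, ← Finset.sum_filter]
  have hprod : ∀ f ∈ Finset.univ.filter fun f : Fin l → Fin l => Function.Bijective f,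
      (2:ℝ)^l * ∏ t, x (f t) = 2^l * ∏ i, x i := by
    intro f hf
    congr 1
    exact Fintype.prod_bijective f (Finset.mem_filter.mp hf).2 _ _ fun t => rfl
  rw [Finset.sum_congr rfl hprod, Finset.sum_const, aux_card_bij, nsmul_eq_mul]
  ring

theorem odd_case
    {Ω : Type*} [MeasurableSpace Ω] (μ : Measure Ω) [IsProbabilityMeasure μ]
    (l : ℕ) (hl : 0 < l) (g : Fin l → Ω → ℝ)
    (hmeas : ∀ i, Measurable (g i))
    (hgauss : ∀ c : Fin l → ℝ, ∃ v : NNReal,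
      Measure.map (fun ω => ∑ i, c i * g i ω) μ = gaussianReal 0 v)
    (ho : Odd l) :
    ∫ ω, ∏ i, g i ω ∂μ = 0 := by
  have hfact : ((2:ℝ) ^ l * l.factorial) ≠ 0 := by positivity
  have hsm : ∀ ε : Fin l → Bool, Measurable (fun ω => ∑ i, sg (ε i) * g i ω) := by
    intro ε
    exact Finset.measurable_sum _ (fun i _ => (hmeas i).const_mul _)
  have hint : ∀ ε : Fin l → Bool,
      Integrable (fun ω => (∑ i, sg (ε i) * g i ω) ^ l) μ := by
    intro ε
    obtain ⟨v, hv⟩ := hgauss (fun i => sg (ε i))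
    have h1 : Integrable (fun x : ℝ => x ^ l)
        (Measure.map (fun ω => ∑ i, sg (ε i) * g i ω) μ) := by
      rw [hv]; exact aux_int_gauss_pow l v
    exact (integrable_map_measure ((measurable_id.pow_const l).aestronglyMeasurable)
      (hsm ε).aemeasurable).mp h1
  have hzero : ∀ ε : Fin l → Bool,
      ∫ ω, (∑ i, sg (ε i) * g i ω) ^ l ∂μ = 0 := by
    intro ε
    obtain ⟨v, hv⟩ := hgauss (fun i => sg (ε i))
    have := integral_map (μ := μ) (φ := fun ω => ∑ i, sg (ε i) * g i ω)
      (f := fun x : ℝ => x ^ l) (hsm ε).aemeasurable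
      ((measurable_id.pow_const l).aestronglyMeasurable)
    rw [hv] at this
    rw [← this, aux_odd_moment ho v]
  have hpt : ∀ ω, ∏ i, g i ω = ((2:ℝ) ^ l * l.factorial)⁻¹ *
      ∑ ε : Fin l → Bool, (∏ i, sg (ε i)) * (∑ i, sg (ε i) * g i ω) ^ l := by
    intro ω
    rw [aux_polar l (fun i => g i ω), ← mul_assoc, inv_mul_cancel₀ hfact, one_mul]
  calc ∫ ω, ∏ i, g i ω ∂μ
      = ∫ ω, ((2:ℝ) ^ l * l.factorial)⁻¹ *
          ∑ ε : Fin l → Bool, (∏ i, sg (ε i)) * (∑ i, sg (ε i) * g i ω) ^ l ∂μ :=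
        integral_congr_ae (Filter.Eventually.of_forall hpt)
    _ = ((2:ℝ) ^ l * l.factorial)⁻¹ *
          ∫ ω, ∑ ε : Fin l → Bool, (∏ i, sg (ε i)) * (∑ i, sg (ε i) * g i ω) ^ l ∂μ :=
        integral_const_mul _ _
    _ = ((2:ℝ) ^ l * l.factorial)⁻¹ *
          ∑ ε : Fin l → Bool, ∫ ω, (∏ i, sg (ε i)) * (∑ i, sg (ε i) * g i ω) ^ l ∂μ := by
        rw [integral_finset_sum _ (fun ε _ => (hint ε).const_mul _)]
    _ = 0 := by
        have : ∀ ε : Fin l → Bool,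
            ∫ ω, (∏ i, sg (ε i)) * (∑ i, sg (ε i) * g i ω) ^ l ∂μ = 0 := by
          intro ε
          rw [integral_const_mul, hzero ε, mul_zero]
        simp [this]

theorem even_case
    {Ω : Type*} [MeasurableSpace Ω] (μ : Measure Ω) [IsProbabilityMeasure μ]
    (l : ℕ) (hl : 0 < l) (g : Fin l → Ω → ℝ)
    (hmeas : ∀ i, Measurable (g i))
    (hstd : ∀ i, Measure.map (g i) μ = gaussianReal 0 1)
    (he : Even l) :
    ∫ ω, ∏ i, g i ω ∂μ ≤ ∫ x, x ^ l ∂(gaussianReal 0 1) := by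
  set γ := gaussianReal 0 1 with hγ
  set K : ℝ≥0∞ := ∫⁻ x, ENNReal.ofReal (|x| ^ l) ∂γ with hK
  have hint := aux_int_gauss l 1
  have hKfin : K ≠ ⊤ :=
    ((hasFiniteIntegral_iff_ofReal
      (Filter.Eventually.of_forall fun x => by positivity)).mp hint.2).ne
  have hl' : (l:ℝ) ≠ 0 := Nat.cast_ne_zero.mpr hl.ne'
  have hH := ENNReal.lintegral_prod_norm_pow_le (μ := μ) Finset.univ
    (f := fun i ω => ENNReal.ofReal |g i ω| ^ l)
    (fun i _ => ((hmeas i).abs.ennreal_ofReal.pow_const l).aemeasurable)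
    (p := fun _ => (l:ℝ)⁻¹)
    (by rw [Finset.sum_const, Finset.card_univ, Fintype.card_fin, nsmul_eq_mul,
      mul_inv_cancel₀ hl'])
    (fun i _ => by positivity)
  have hpow : ∀ c : ℝ≥0∞, (c ^ l) ^ ((l:ℝ)⁻¹) = c := by
    intro c
    rw [← ENNReal.rpow_natCast c l, ← ENNReal.rpow_mul, mul_inv_cancel₀ hl', ENNReal.rpow_one]
  have hlint : ∀ i, ∫⁻ ω, ENNReal.ofReal |g i ω| ^ l ∂μ = K := by
    intro i
    have hofr : ∀ ω, ENNReal.ofReal |g i ω| ^ l = ENNReal.ofReal (|g i ω| ^ l) :=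
      fun ω => (ENNReal.ofReal_pow (abs_nonneg _) l).symm
    simp_rw [hofr]
    rw [hK, ← hstd i, lintegral_map (by fun_prop) (hmeas i)]
  have hmain : ∫⁻ ω, ∏ i, ENNReal.ofReal |g i ω| ∂μ ≤ K := by
    have h0 : ∀ ω, ∏ i, ENNReal.ofReal |g i ω|
        = ∏ i, (ENNReal.ofReal |g i ω| ^ l) ^ ((l:ℝ)⁻¹) := by
      intro ω; exact Finset.prod_congr rfl fun i _ => (hpow _).symm
    calc ∫⁻ ω, ∏ i, ENNReal.ofReal |g i ω| ∂μ
        = ∫⁻ ω, ∏ i, (ENNReal.ofReal |g i ω| ^ l) ^ ((l:ℝ)⁻¹) ∂μ := by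
          exact lintegral_congr h0
      _ ≤ ∏ i : Fin l, (∫⁻ ω, ENNReal.ofReal |g i ω| ^ l ∂μ) ^ ((l:ℝ)⁻¹) := hH
      _ = (K ^ ((l:ℝ)⁻¹)) ^ (l:ℕ) := by
          simp_rw [hlint]
          rw [Finset.prod_const, Finset.card_univ, Fintype.card_fin]
      _ = K := by
          rw [← ENNReal.rpow_natCast (K ^ ((l:ℝ)⁻¹)) l, ← ENNReal.rpow_mul,
            inv_mul_cancel₀ hl', ENNReal.rpow_one]
  have habs : ∀ ω, ENNReal.ofReal (|∏ i, g i ω|) = ∏ i, ENNReal.ofReal |g i ω| := by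
    intro ω
    rw [Finset.abs_prod, ENNReal.ofReal_prod_of_nonneg (fun i _ => abs_nonneg _)]
  have h1 : ∫ ω, ∏ i, g i ω ∂μ ≤ ∫ ω, |∏ i, g i ω| ∂μ :=
    (le_abs_self _).trans (by
      simpa only [Real.norm_eq_abs] using
        norm_integral_le_integral_norm (f := fun ω => ∏ i, g i ω) (μ := μ))
  have hmp : Measurable fun ω => ∏ i, g i ω := Finset.measurable_prod _ fun i _ => hmeas i
  have h2 : ∫ ω, |∏ i, g i ω| ∂μ = (∫⁻ ω, ENNReal.ofReal (|∏ i, g i ω|) ∂μ).toReal := by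
    rw [integral_eq_lintegral_of_nonneg_ae (Filter.Eventually.of_forall fun ω => abs_nonneg _)
      hmp.abs.aestronglyMeasurable]
  have h3 : ∫ x, x ^ l ∂γ = K.toReal := by
    rw [show ∫ x, x ^ l ∂γ = ∫ x, |x| ^ l ∂γ from
        integral_congr_ae (Filter.Eventually.of_forall fun x => (he.pow_abs x).symm),
      integral_eq_lintegral_of_nonneg_ae (Filter.Eventually.of_forall fun x => by positivity)
        ((by measurability : Measurable fun x : ℝ => |x| ^ l)).aestronglyMeasurable]
  rw [h3]
  refine h1.trans ?_
  rw [h2]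
  refine ENNReal.toReal_mono hKfin ?_
  calc ∫⁻ ω, ENNReal.ofReal (|∏ i, g i ω|) ∂μ
      = ∫⁻ ω, ∏ i, ENNReal.ofReal |g i ω| ∂μ := lintegral_congr habs
    _ ≤ K := hmain

/-- Let `g₁, …, g_l` be jointly Gaussian real random variables (every linear
combination is Gaussian), each centered with variance 1, with pairwise
nonnegative covariances. Then `E[g₁ ⋯ g_l] ≤ E[g₁^l]`. -/
theorem expectation_prod_le_moment_of_jointly_gaussian
    {Ω : Type*} [MeasurableSpace Ω] (μ : Measure Ω) [IsProbabilityMeasure μ]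
    (l : ℕ) (hl : 0 < l) (g : Fin l → Ω → ℝ)
    (hmeas : ∀ i, Measurable (g i))
    (hgauss : ∀ c : Fin l → ℝ, ∃ v : NNReal,
      Measure.map (fun ω => ∑ i, c i * g i ω) μ = gaussianReal 0 v)
    (hstd : ∀ i, Measure.map (g i) μ = gaussianReal 0 1)
    (hcov : ∀ i j, 0 ≤ ∫ ω, g i ω * g j ω ∂μ) :
    ∫ ω, ∏ i, g i ω ∂μ ≤ ∫ ω, (g ⟨0, hl⟩ ω) ^ l ∂μ := by
  have hRHS : ∫ ω, (g ⟨0, hl⟩ ω) ^ l ∂μ = ∫ x, x ^ l ∂(gaussianReal 0 1) := by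
    rw [← hstd ⟨0, hl⟩, integral_map (f := fun x : ℝ => x ^ l) (hmeas _).aemeasurable
      ((by measurability : Measurable fun x : ℝ => x ^ l)).aestronglyMeasurable]
  rcases Nat.even_or_odd l with he | ho
  · rw [hRHS]
    exact even_case μ l hl g hmeas hstd he
  · rw [hRHS, aux_odd_moment ho 1, odd_case μ l hl g hmeas hgauss ho]
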